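/- Let f : ℝ → ℝ be a returning function with closed graph whose set C(f) of continuity points is not all of ℝ. Then any two distinct connected components of C(f) have disjoint closures in ℝ. -/

import Mathlib

/-- A function `f : X → ℝ` is *returning* if for every point `x` there is a positive
real `M` such that for every path-connected subset `C ⊆ X` containing `x` and every
`y ∈ C \ {x}` there exists `z ∈ C \ {x, y}` with `|f z| ≤ max M |f y|`. -/
def Returning {X : Type*} [TopologicalSpace X] (f : X → ℝ) : Prop :=
  ∀ x : X, ∃ M : ℝ, 0 < M ∧ ∀ C : Set X, IsPathConnected C → x ∈ C →
    ∀ y ∈ C \ {x}, ∃ z ∈ C \ ({x, y} : Set X), |f z| ≤ max M |f y|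

open Set Filter Topology

lemma lim_eq_graph (f : ℝ → ℝ) (hgr : IsClosed {p : ℝ × ℝ | p.2 = f p.1})
    {s : ℕ → ℝ} {p L : ℝ} (hs : Tendsto s atTop (𝓝 p))
    (hf : Tendsto (fun n => f (s n)) atTop (𝓝 L)) : L = f p := by
  have h : Tendsto (fun n => (s n, f (s n))) atTop (𝓝 (p, L)) := hs.prodMk_nhds hf
  have := hgr.mem_of_tendsto h (Eventually.of_forall fun n => rfl)
  exact this

lemma seq_lim (f : ℝ → ℝ) (hgr : IsClosed {p : ℝ × ℝ | p.2 = f p.1})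
    {s : ℕ → ℝ} {p K : ℝ} (hs : Tendsto s atTop (𝓝 p))
    (hK : ∀ n, |f (s n)| ≤ K) :
    Tendsto (fun n => f (s n)) atTop (𝓝 (f p)) := by
  apply tendsto_of_subseq_tendsto
  intro ns hns
  have hmem : ∀ n, f (s (ns n)) ∈ Icc (-K) K := fun n => abs_le.1 (hK (ns n))
  obtain ⟨a, _, φ, hφ, ha⟩ :=
    tendsto_subseq_of_bounded (Metric.isBounded_Icc (-K) K) hmem
  have haf : a = f p :=
    lim_eq_graph f hgr (hs.comp ((hns.comp hφ.tendsto_atTop))) ha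
  exact ⟨φ, haf ▸ ha⟩

lemma contAt_of_bdd (f : ℝ → ℝ) (hgr : IsClosed {p : ℝ × ℝ | p.2 = f p.1})
    {p K : ℝ} (h : ∀ᶠ t in 𝓝 p, |f t| ≤ K) : ContinuousAt f p := by
  rw [ContinuousAt, tendsto_iff_seq_tendsto]
  intro u hu
  have hev : ∀ᶠ n in atTop, |f (u n)| ≤ K := hu.eventually h
  obtain ⟨N, hN⟩ := eventually_atTop.1 hev
  have hv : Tendsto (fun n => u (n + N)) atTop (𝓝 p) :=
    hu.comp (tendsto_add_atTop_nat N)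
  have := seq_lim f hgr hv (fun n => hN (n + N) (Nat.le_add_left N n))
  exact (tendsto_add_atTop_iff_nat N).1 this

lemma open_cont (f : ℝ → ℝ) (hgr : IsClosed {p : ℝ × ℝ | p.2 = f p.1}) :
    IsOpen {z : ℝ | ContinuousAt f z} := by
  rw [isOpen_iff_mem_nhds]
  intro x hx
  have h1 : ∀ᶠ t in 𝓝 x, |f t| ≤ |f x| + 1 := by
    have := hx (Metric.closedBall_mem_nhds (f x) one_pos)
    filter_upwards [this] with t ht
    have : |f t - f x| ≤ 1 := by simpa [Real.dist_eq] using ht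
    calc |f t| = |f t - f x + f x| := by ring_nf
    _ ≤ |f t - f x| + |f x| := abs_add_le _ _
    _ ≤ |f x| + 1 := by linarith
  obtain ⟨U, hUsub, hUopen, hxU⟩ := eventually_nhds_iff.1 h1
  filter_upwards [hUopen.mem_nhds hxU] with t htU
  exact contAt_of_bdd f hgr (eventually_nhds_iff.2 ⟨U, hUsub, hUopen, htU⟩)

lemma bdd_side (f : ℝ → ℝ) (hgr : IsClosed {p : ℝ × ℝ | p.2 = f p.1})
    {p c : ℝ} (hc : c < p)
    (hcont : ∀ t ∈ Ioo c p, ContinuousAt f t)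
    (hnt : ¬ Tendsto (fun t => |f t|) (𝓝[<] p) atTop) :
    ∃ K, ∀ᶠ t in 𝓝[<] p, |f t| ≤ K := by
  rw [tendsto_atTop] at hnt
  push_neg at hnt
  obtain ⟨K, hK⟩ := hnt
  set K' := max K |f p| + 1 with hK'def
  refine ⟨K', ?_⟩
  by_contra hcon
  rw [not_eventually] at hcon
  push_neg at hcon
  -- for each n, find t in (max c (p - 1/(n+1)), p) with |f t| = K'
  have hex : ∀ n : ℕ, ∃ t ∈ Ioo (max c (p - 1/(n+1))) p, |f t| = K' := by
    intro n
    have hb : max c (p - 1/(n+1)) < p := by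
      apply max_lt hc
      have : (0:ℝ) < 1/(n+1) := by positivity
      linarith
    have hU : Ioo (max c (p - 1/(n+1))) p ∈ 𝓝[<] p :=
      Ioo_mem_nhdsLT hb
    obtain ⟨t1, ht1U, ht1⟩ := Filter.frequently_iff.1 hK hU
    obtain ⟨t2, ht2U, ht2⟩ := Filter.frequently_iff.1 hcon hU
    have hsub : uIcc t1 t2 ⊆ Ioo (max c (p - 1/(n+1))) p :=
      (ordConnected_Ioo).uIcc_subset ht1U ht2U
    have hsub' : uIcc t1 t2 ⊆ Ioo c p := fun t ht => by
      obtain ⟨h1, h2⟩ := hsub ht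
      exact ⟨lt_of_le_of_lt (le_max_left _ _) h1, h2⟩
    have hgc : ContinuousOn (fun t => |f t|) (uIcc t1 t2) := fun t ht =>
      ((hcont t (hsub' ht)).abs).continuousWithinAt
    have hmem : K' ∈ uIcc (|f t1|) (|f t2|) := by
      have h1 : |f t1| ≤ K' := by
        have : K ≤ max K |f p| := le_max_left _ _
        linarith [ht1.le]
      rcases le_total (|f t1|) (|f t2|) with h | h
      · rw [uIcc_of_le h]; exact ⟨h1, ht2.le⟩
      · exact absurd (ht2.trans_le h) (not_lt.2 h1)
    obtain ⟨t, htm, htv⟩ := intermediate_value_uIcc hgc hmem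
    exact ⟨t, hsub htm, htv⟩
  choose t ht htv using hex
  have htp : Tendsto t atTop (𝓝 p) := by
    have hlow : Tendsto (fun n : ℕ => p - 1/(n+1)) atTop (𝓝 p) := by
      have := tendsto_one_div_add_atTop_nhds_zero_nat (𝕜 := ℝ)
      simpa using (tendsto_const_nhds (x := p)).sub this
    refine tendsto_of_tendsto_of_tendsto_of_le_of_le hlow tendsto_const_nhds
      (fun n => ?_) (fun n => (ht n).2.le)
    exact le_trans (le_max_right _ _) (ht n).1.le
  have hlim : Tendsto (fun n => f (t n)) atTop (𝓝 (f p)) :=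
    seq_lim f hgr htp (fun n => (htv n).le)
  have : Tendsto (fun n => |f (t n)|) atTop (𝓝 (|f p|)) := hlim.abs
  have heq : K' = |f p| := by
    apply tendsto_nhds_unique _ this
    simpa [htv] using tendsto_const_nhds (x := K')
  have : |f p| ≤ max K |f p| := le_max_right _ _
  linarith

lemma returning_side (f : ℝ → ℝ) {p M : ℝ} (hM : 0 < M)
    (hret : ∀ C : Set ℝ, IsPathConnected C → p ∈ C →
      ∀ y ∈ C \ {p}, ∃ z ∈ C \ ({p, y} : Set ℝ), |f z| ≤ max M |f y|)
    {c0 : ℝ} (hc0 : c0 < p) (hcont : ∀ t ∈ Ioo c0 p, ContinuousAt f t)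
    (htend : Tendsto (fun t => |f t|) (𝓝[<] p) atTop) : False := by
  set g := fun t => |f t| with hg
  obtain ⟨l, hl, hsub1⟩ := mem_nhdsLT_iff_exists_Ioo_subset.1
    (htend.eventually_ge_atTop (M + 1))
  have ha1 : max l c0 < p := max_lt hl hc0
  obtain ⟨d, hd1, hd2⟩ := exists_between ha1
  obtain ⟨l2, hl2, hsub2⟩ := mem_nhdsLT_iff_exists_Ioo_subset.1
    (htend.eventually_ge_atTop (g d + 1))
  have he : max l2 d < p := max_lt hl2 hd2
  obtain ⟨e', he1, he2⟩ := exists_between he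
  have hde' : d ≤ e' := le_trans (le_max_right _ _) he1.le
  have hIccsub : Icc d e' ⊆ Ioo (max l c0) p := fun t ht =>
    ⟨lt_of_lt_of_le hd1 ht.1, lt_of_le_of_lt ht.2 he2⟩
  have hIccc0 : Icc d e' ⊆ Ioo c0 p := fun t ht =>
    ⟨lt_of_le_of_lt (le_max_right l c0) (hIccsub ht).1, (hIccsub ht).2⟩
  have hgc : ContinuousOn g (Icc d e') := fun t ht =>
    ((hcont t (hIccc0 ht)).abs).continuousWithinAt
  obtain ⟨t₀, ht₀, hmin⟩ := isCompact_Icc.exists_isMinOn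
    (nonempty_Icc.2 hde') hgc
  set m := g t₀ with hm
  set A := Icc d e' ∩ g ⁻¹' {m} with hA
  have hAclosed : IsClosed A :=
    hgc.preimage_isClosed_of_isClosed isClosed_Icc isClosed_singleton
  have hAne : A.Nonempty := ⟨t₀, ht₀, rfl⟩
  have hAbdd : BddAbove A := (bddAbove_Icc).mono inter_subset_left
  set c := sSup A with hc
  have hcA : c ∈ A := hAclosed.csSup_mem hAne hAbdd
  have hcIcc : c ∈ Icc d e' := hcA.1
  have hgcm : g c = m := hcA.2
  have hcp : c < p := lt_of_le_of_lt hcIcc.2 he2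
  have hgcM : M + 1 ≤ g c := hsub1 ⟨lt_of_le_of_lt (le_max_left l c0)
    (lt_of_lt_of_le hd1 hcIcc.1), hcp⟩
  obtain ⟨z, hzmem, hzle⟩ := hret (Icc c p)
    ((convex_Icc c p).isPathConnected ⟨c, left_mem_Icc.2 hcp.le⟩)
    (right_mem_Icc.2 hcp.le) c ⟨left_mem_Icc.2 hcp.le, by simp [hcp.ne]⟩
  obtain ⟨hzC, hzne⟩ := hzmem
  have hznep : z ≠ p := fun h => hzne (by simp [h])
  have hznec : z ≠ c := fun h => hzne (by simp [h])
  have hzIoo : z ∈ Ioo c p := ⟨lt_of_le_of_ne hzC.1 (Ne.symm hznec),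
    lt_of_le_of_ne hzC.2 hznep⟩
  have hmax : max M (|f c|) = g c := max_eq_right (by linarith)
  rw [hmax] at hzle
  -- show g z > g c
  have hgz : g c < g z := by
    rcases le_or_gt z e' with hze | hze
    · have hzIcc : z ∈ Icc d e' := ⟨le_trans hcIcc.1 hzIoo.1.le, hze⟩
      have h1 : m ≤ g z := isMinOn_iff.1 hmin z hzIcc
      rcases eq_or_lt_of_le h1 with h | h
      · exfalso
        have : z ∈ A := ⟨hzIcc, h.symm⟩
        have : z ≤ c := le_csSup hAbdd this
        exact absurd this (not_le.2 hzIoo.1)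
      · rw [hgcm]; exact h
    · have : z ∈ Ioo l2 p := ⟨lt_of_le_of_lt (le_max_left l2 d)
        (lt_trans he1 hze), hzIoo.2⟩
      have h2 : g d + 1 ≤ g z := hsub2 this
      have h3 : m ≤ g d := isMinOn_iff.1 hmin d (left_mem_Icc.2 hde')
      rw [hgcm]; linarith
  exact absurd hzle (not_le.2 hgz)

lemma ret_reflect (f : ℝ → ℝ) {p M : ℝ}
    (hret : ∀ C : Set ℝ, IsPathConnected C → p ∈ C →
      ∀ y ∈ C \ {p}, ∃ z ∈ C \ ({p, y} : Set ℝ), |f z| ≤ max M |f y|) :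
    ∀ C : Set ℝ, IsPathConnected C → p ∈ C →
      ∀ y ∈ C \ {p}, ∃ z ∈ C \ ({p, y} : Set ℝ),
        |(f ∘ fun t => 2*p - t) z| ≤ max M (|(f ∘ fun t => 2*p - t) y|) := by
  intro C hC hpC y hy
  set r : ℝ → ℝ := fun t => 2*p - t with hr
  have hrcont : Continuous r := continuous_const.sub continuous_id
  have hrinj : Function.Injective r := fun a b h => by
    simp only [hr] at h; linarith
  have hrp : r p = p := by simp [hr]; ring
  have hC' : IsPathConnected (r '' C) := hC.image hrcont
  have hp' : p ∈ r '' C := ⟨p, hpC, hrp⟩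
  have hy' : r y ∈ r '' C \ {p} := by
    refine ⟨⟨y, hy.1, rfl⟩, ?_⟩
    simp only [mem_singleton_iff]
    intro h
    exact hy.2 (hrinj (h.trans hrp.symm))
  obtain ⟨z', ⟨⟨z, hzC, hzz'⟩, hz'ne⟩, hz'le⟩ := hret (r '' C) hC' hp' (r y) hy'
  refine ⟨z, ⟨hzC, ?_⟩, ?_⟩
  · simp only [mem_insert_iff, mem_singleton_iff] at hz'ne ⊢
    push_neg at hz'ne ⊢
    subst hzz'
    exact ⟨fun h => hz'ne.1 (by rw [h, hrp]), fun h => hz'ne.2 (by rw [h])⟩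
  · subst hzz'
    simpa using hz'le

lemma graph_reflect (f : ℝ → ℝ) (hgr : IsClosed {p : ℝ × ℝ | p.2 = f p.1}) (p : ℝ) :
    IsClosed {q : ℝ × ℝ | q.2 = (f ∘ fun t => 2*p - t) q.1} := by
  have : {q : ℝ × ℝ | q.2 = (f ∘ fun t => 2*p - t) q.1}
      = (fun q : ℝ × ℝ => (2*p - q.1, q.2)) ⁻¹' {q : ℝ × ℝ | q.2 = f q.1} := rfl
  rw [this]
  exact hgr.preimage ((continuous_const.sub continuous_fst).prodMk continuous_snd)

lemma point_false (f : ℝ → ℝ) (hgr : IsClosed {p : ℝ × ℝ | p.2 = f p.1})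
    (hret : Returning f) {p cL cR : ℝ}
    (hdisc : ¬ ContinuousAt f p) (hcL : cL < p) (hcR : p < cR)
    (hcontL : ∀ t ∈ Ioo cL p, ContinuousAt f t)
    (hcontR : ∀ t ∈ Ioo p cR, ContinuousAt f t) : False := by
  obtain ⟨M, hM, hretp⟩ := hret p
  set r : ℝ → ℝ := fun t => 2*p - t with hrdef
  have hrcont : Continuous r := continuous_const.sub continuous_id
  have hrr : ∀ t, r (r t) = t := fun t => by simp [hrdef]
  have hrlt : Tendsto r (𝓝[<] p) (𝓝[>] p) := by
    rw [tendsto_nhdsWithin_iff]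
    constructor
    · have h1 : Tendsto r (𝓝 p) (𝓝 (r p)) := hrcont.tendsto p
      have : r p = p := by simp [hrdef]; ring
      rw [this] at h1
      exact h1.mono_left nhdsWithin_le_nhds
    · filter_upwards [eventually_mem_nhdsWithin] with t ht
      simp only [mem_Iio] at ht
      simp only [mem_Ioi, hrdef]
      linarith
  have hrgt : Tendsto r (𝓝[>] p) (𝓝[<] p) := by
    rw [tendsto_nhdsWithin_iff]
    constructor
    · have h1 : Tendsto r (𝓝 p) (𝓝 (r p)) := hrcont.tendsto p
      have : r p = p := by simp [hrdef]; ring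
      rw [this] at h1
      exact h1.mono_left nhdsWithin_le_nhds
    · filter_upwards [eventually_mem_nhdsWithin] with t ht
      simp only [mem_Ioi] at ht
      simp only [mem_Iio, hrdef]
      linarith
  have hcont' : ∀ t ∈ Ioo (2*p - cR) p, ContinuousAt (f ∘ r) t := by
    intro t ht
    have hrt : r t ∈ Ioo p cR := by
      simp only [mem_Ioo, hrdef]
      constructor <;> [skip; skip] <;> · obtain ⟨h1, h2⟩ := ht; linarith [h1, h2]
    exact (hcontR _ hrt).comp (hrcont.continuousAt)
  have hcRp : 2*p - cR < p := by linarith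
  by_cases hL : Tendsto (fun t => |f t|) (𝓝[<] p) atTop
  · exact returning_side f hM hretp hcL hcontL hL
  by_cases hR : Tendsto (fun t => |f t|) (𝓝[>] p) atTop
  · refine returning_side (f ∘ r) hM (ret_reflect f hretp) hcRp hcont' ?_
    exact hR.comp hrlt
  -- both sides bounded
  obtain ⟨K1, hK1⟩ := bdd_side f hgr hcL hcontL hL
  have hR' : ¬ Tendsto (fun t => |(f ∘ r) t|) (𝓝[<] p) atTop := by
    intro h
    apply hR
    have := h.comp hrgt
    refine this.congr fun t => ?_
    simp [Function.comp, hrr t]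
  obtain ⟨K2, hK2'⟩ := bdd_side (f ∘ r) (graph_reflect f hgr p) hcRp hcont' hR'
  have hK2 : ∀ᶠ t in 𝓝[>] p, |f t| ≤ K2 := by
    have := hrgt.eventually hK2'
    refine this.mono fun t ht => ?_
    simpa [Function.comp, hrr t] using ht
  apply hdisc
  apply contAt_of_bdd f hgr (K := max (max K1 K2) (|f p|))
  have hpunct : ∀ᶠ t in 𝓝[≠] p, |f t| ≤ max K1 K2 := by
    rw [← nhdsLT_sup_nhdsGT, eventually_sup]
    exact ⟨hK1.mono fun t ht => le_trans ht (le_max_left _ _),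
      hK2.mono fun t ht => le_trans ht (le_max_right _ _)⟩
  rw [eventually_nhdsWithin_iff] at hpunct
  filter_upwards [hpunct] with t ht
  rcases eq_or_ne t p with h | h
  · subst h; exact le_max_right _ _
  · exact le_trans (ht h) (le_max_left _ _)

theorem stmt_6 (f : ℝ → ℝ) (hret : Returning f)
    (hgr : IsClosed {p : ℝ × ℝ | p.2 = f p.1})
    (hne : {x : ℝ | ContinuousAt f x} ≠ Set.univ)
    (x y : ℝ) (hx : ContinuousAt f x) (hy : ContinuousAt f y)
    (hxy : connectedComponentIn {z : ℝ | ContinuousAt f z} x ≠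
           connectedComponentIn {z : ℝ | ContinuousAt f z} y) :
    Disjoint (closure (connectedComponentIn {z : ℝ | ContinuousAt f z} x))
             (closure (connectedComponentIn {z : ℝ | ContinuousAt f z} y)) := by
  set S := {z : ℝ | ContinuousAt f z} with hS
  have hSopen : IsOpen S := open_cont f hgr
  set Cx := connectedComponentIn S x with hCx
  set Cy := connectedComponentIn S y with hCy
  by_contra hcon
  obtain ⟨p, hpx, hpy⟩ := Set.not_disjoint_iff.1 hcon
  have hxCx : x ∈ Cx := mem_connectedComponentIn hx
  have hyCy : y ∈ Cy := mem_connectedComponentIn hy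
  have hCxS : Cx ⊆ S := connectedComponentIn_subset S x
  have hCyS : Cy ⊆ S := connectedComponentIn_subset S y
  have hordx : OrdConnected Cx := isPreconnected_connectedComponentIn.ordConnected
  have hordy : OrdConnected Cy := isPreconnected_connectedComponentIn.ordConnected
  -- distinct components are disjoint
  have hdisj : ∀ t, t ∈ Cx → t ∈ Cy → False := by
    intro t htx hty
    exact hxy ((connectedComponentIn_eq htx).trans (connectedComponentIn_eq hty).symm)
  -- p is a discontinuity point
  have hpS : p ∉ S := by
    intro hpS
    have hCpopen : IsOpen (connectedComponentIn S p) := hSopen.connectedComponentIn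
    have hppC : p ∈ connectedComponentIn S p := mem_connectedComponentIn hpS
    obtain ⟨t1, ht1p, ht1x⟩ := mem_closure_iff.1 hpx _ hCpopen hppC
    obtain ⟨t2, ht2p, ht2y⟩ := mem_closure_iff.1 hpy _ hCpopen hppC
    have e1 : Cx = connectedComponentIn S p :=
      (connectedComponentIn_eq ht1x).trans (connectedComponentIn_eq ht1p).symm
    have e2 : Cy = connectedComponentIn S p :=
      (connectedComponentIn_eq ht2y).trans (connectedComponentIn_eq ht2p).symm
    exact hxy (e1.trans e2.symm)
  have hpCx : p ∉ Cx := fun h => hpS (hCxS h)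
  have hpCy : p ∉ Cy := fun h => hpS (hCyS h)
  -- each component lies on one side of p
  have hside : ∀ A : Set ℝ, OrdConnected A → p ∉ A → A ⊆ Iio p ∨ A ⊆ Ioi p := by
    intro A hord hpA
    by_contra h
    push_neg at h
    obtain ⟨h1, h2⟩ := h
    obtain ⟨u, huA, hup⟩ := not_subset.1 h1
    obtain ⟨v, hvA, hvp⟩ := not_subset.1 h2
    simp only [mem_Iio, not_lt] at hup
    simp only [mem_Ioi, not_lt] at hvp
    exact hpA (hord.out hvA huA ⟨hvp, hup⟩)
  -- two components on the same side of p with p in both closures must meet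
  have hsame_lt : ∀ A B : Set ℝ, OrdConnected A → OrdConnected B →
      p ∈ closure A → p ∈ closure B → A ⊆ Iio p → B ⊆ Iio p →
      A.Nonempty → B.Nonempty → ∃ t, t ∈ A ∧ t ∈ B := by
    intro A B hoA hoB hclA hclB hAlt hBlt ⟨u, huA⟩ ⟨v, hvB⟩
    rcases le_total u v with huv | huv
    · obtain ⟨w, hwv, hwA⟩ := mem_closure_iff.1 hclA (Ioi v) isOpen_Ioi (hBlt hvB)
      exact ⟨v, hoA.out huA hwA ⟨huv, (mem_Ioi.1 hwv).le⟩, hvB⟩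
    · obtain ⟨w, hwu, hwB⟩ := mem_closure_iff.1 hclB (Ioi u) isOpen_Ioi (hAlt huA)
      exact ⟨u, huA, hoB.out hvB hwB ⟨huv, (mem_Ioi.1 hwu).le⟩⟩
  have hsame_gt : ∀ A B : Set ℝ, OrdConnected A → OrdConnected B →
      p ∈ closure A → p ∈ closure B → A ⊆ Ioi p → B ⊆ Ioi p →
      A.Nonempty → B.Nonempty → ∃ t, t ∈ A ∧ t ∈ B := by
    intro A B hoA hoB hclA hclB hAgt hBgt ⟨u, huA⟩ ⟨v, hvB⟩
    rcases le_total v u with huv | huv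
    · obtain ⟨w, hwv, hwA⟩ := mem_closure_iff.1 hclA (Iio v) isOpen_Iio (hBgt hvB)
      exact ⟨v, hoA.out hwA huA ⟨(mem_Iio.1 hwv).le, huv⟩, hvB⟩
    · obtain ⟨w, hwu, hwB⟩ := mem_closure_iff.1 hclB (Iio u) isOpen_Iio (hAgt huA)
      exact ⟨u, huA, hoB.out hwB hvB ⟨(mem_Iio.1 hwu).le, huv⟩⟩
  -- main contradiction, given A left of p and B right of p
  have main : ∀ A B : Set ℝ, OrdConnected A → OrdConnected B →
      p ∈ closure A → p ∈ closure B → A ⊆ Iio p → B ⊆ Ioi p →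
      A ⊆ S → B ⊆ S → A.Nonempty → B.Nonempty → False := by
    intro A B hoA hoB hclA hclB hAlt hBgt hAS hBS ⟨u, huA⟩ ⟨v, hvB⟩
    have hup : u < p := hAlt huA
    have hpv : p < v := hBgt hvB
    have hIooA : Ioo u p ⊆ A := by
      intro t ht
      obtain ⟨w, hwt, hwA⟩ := mem_closure_iff.1 hclA (Ioi t) isOpen_Ioi ht.2
      exact hoA.out huA hwA ⟨ht.1.le, (mem_Ioi.1 hwt).le⟩
    have hIooB : Ioo p v ⊆ B := by
      intro t ht
      obtain ⟨w, hwt, hwB⟩ := mem_closure_iff.1 hclB (Iio t) isOpen_Iio ht.1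
      exact hoB.out hwB hvB ⟨(mem_Iio.1 hwt).le, ht.2.le⟩
    exact point_false f hgr hret hpS hup hpv
      (fun t ht => hAS (hIooA ht)) (fun t ht => hBS (hIooB ht))
  rcases hside Cx hordx hpCx with hxlt | hxgt
  · rcases hside Cy hordy hpCy with hylt | hygt
    · obtain ⟨t, htx, hty⟩ := hsame_lt Cx Cy hordx hordy hpx hpy hxlt hylt
        ⟨x, hxCx⟩ ⟨y, hyCy⟩
      exact hdisj t htx hty
    · exact main Cx Cy hordx hordy hpx hpy hxlt hygt hCxS hCyS ⟨x, hxCx⟩ ⟨y, hyCy⟩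
  · rcases hside Cy hordy hpCy with hylt | hygt
    · exact main Cy Cx hordy hordx hpy hpx hylt hxgt hCyS hCxS ⟨y, hyCy⟩ ⟨x, hxCx⟩
    · obtain ⟨t, htx, hty⟩ := hsame_gt Cx Cy hordx hordy hpx hpy hxgt hygt
        ⟨x, hxCx⟩ ⟨y, hyCy⟩
      exact hdisj t htx hty
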